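/- (Corollary 1.3.) Assume moreover r_i ≥ 2 for every i. Then X is uninflected if and only if all the generating curves are uninflected; precisely: rank M^{X,s}_2(t, u) = 2n + 1 for every t ∈ ℂ, every s ∈ {1,…,n} and all scalars u_i ∈ ℂ (i ≠ s), if and only if rank M^i_2(t) = 3 for every i ∈ {1,…,n} and every t ∈ ℂ. -/

import Mathlib

open Matrix

/-- The `k`-th jet matrix `M^i_k(t)` of a parametrized curve. -/
noncomputable def curveJet (r : ℕ) (a : ℂ → Fin (r + 1) → ℂ) (k : ℕ) (t : ℂ) :
    Matrix (Fin (k + 1)) (Fin (r + 1)) ℂ :=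
  Matrix.of fun l j => iteratedDeriv (l : ℕ) (fun s => a s j) t

/-- The `i`-th block inclusion `ι_i : ℂ^{r_i+1} → V`. -/
noncomputable def blockIncl {n : ℕ} (r : Fin n → ℕ) (i : Fin n)
    (v : Fin (r i + 1) → ℂ) : (Σ j : Fin n, Fin (r j + 1)) → ℂ :=
  fun p => if h : p.1 = i then v (Fin.cast (by rw [h]) p.2) else 0

/-- The `k`-th jet matrix `M^{X,s}_k(t,u)` of the decomposable scroll. -/
noncomputable def scrollJet {n : ℕ} (r : Fin n → ℕ)
    (a : ∀ i : Fin n, ℂ → Fin (r i + 1) → ℂ) (k : ℕ) (s : Fin n) (t : ℂ)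
    (u : Fin n → ℂ) :
    Matrix (Fin (k + 1) ⊕ ({i : Fin n // i ≠ s} × Fin k))
      (Σ j : Fin n, Fin (r j + 1)) ℂ :=
  Matrix.of fun row =>
    match row with
    | Sum.inl l =>
        blockIncl r s (curveJet (r s) (a s) k t l) +
          ∑ i ∈ Finset.univ.filter (fun i => i ≠ s),
            u i • blockIncl r i (curveJet (r i) (a i) k t l)
    | Sum.inr q =>
        blockIncl r q.1.1 (curveJet (r q.1.1) (a q.1.1) k t q.2.castSucc)

/-- The row space of a matrix, i.e. the span of its rows. -/
noncomputable def rowSpace {m α : Type*} [Fintype m] (M : Matrix m α ℂ) : Submodule ℂ (α → ℂ) :=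
  Submodule.span ℂ (Set.range fun i => M i)
lemma blockIncl_same {n : ℕ} (r : Fin n → ℕ) (i : Fin n) (v : Fin (r i + 1) → ℂ)
    (x : Fin (r i + 1)) : blockIncl r i v ⟨i, x⟩ = v x := by
  simp [blockIncl]

lemma blockIncl_ne {n : ℕ} (r : Fin n → ℕ) {i j : Fin n} (h : j ≠ i) (v : Fin (r i + 1) → ℂ)
    (x : Fin (r j + 1)) : blockIncl r i v ⟨j, x⟩ = 0 := by
  simp [blockIncl, h]

noncomputable def blockInclL {n : ℕ} (r : Fin n → ℕ) (i : Fin n) :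
    (Fin (r i + 1) → ℂ) →ₗ[ℂ] ((Σ j : Fin n, Fin (r j + 1)) → ℂ) where
  toFun := blockIncl r i
  map_add' u v := by funext p; by_cases h : p.1 = i <;> simp [blockIncl, h]
  map_smul' c v := by funext p; by_cases h : p.1 = i <;> simp [blockIncl, h]

lemma rank_eq_card_iff_li {m α : Type*} [Fintype m] [Fintype α] (M : Matrix m α ℂ) :
    M.rank = Fintype.card m ↔ LinearIndependent ℂ (fun i => M i) := by
  rw [Matrix.rank_eq_finrank_span_row, linearIndependent_iff_card_eq_finrank_span, Set.finrank,
    eq_comm]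
  rfl

lemma curveJet_two_castSucc (r : ℕ) (a : ℂ → Fin (r + 1) → ℂ) (t : ℂ) (m : Fin 2) :
    curveJet r a 2 t m.castSucc = curveJet r a 1 t m := by
  funext j; simp [curveJet]

/-- Corollary 1.3: assuming moreover `r_i ≥ 2` for all `i`, the
scroll `X` is uninflected iff all the generating curves are uninflected. -/
theorem statement4 {n : ℕ} (hn : 2 ≤ n) (r : Fin n → ℕ) (hr : ∀ i, 2 ≤ r i)
    (a : ∀ i : Fin n, ℂ → Fin (r i + 1) → ℂ)
    (hent : ∀ i j, Differentiable ℂ fun t => a i t j)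
    (hnd : ∀ i t, (curveJet (r i) (a i) 1 t).rank = 2) :
    (∀ (t : ℂ) (s : Fin n) (u : Fin n → ℂ),
        (scrollJet r a 2 s t u).rank = 2 * n + 1) ↔
      (∀ (i : Fin n) (t : ℂ), (curveJet (r i) (a i) 2 t).rank = 3) := by
  classical
  have hli1 : ∀ (i : Fin n) (t : ℂ),
      LinearIndependent ℂ (fun m => curveJet (r i) (a i) 1 t m) := by
    intro i t
    exact (rank_eq_card_iff_li _).mp (by simpa using hnd i t)
  have hcard : ∀ s : Fin n,
      Fintype.card (Fin 3 ⊕ ({i : Fin n // i ≠ s} × Fin 2)) = 2 * n + 1 := by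
    intro s
    have h1 : Fintype.card {i : Fin n // i ≠ s} = n - 1 := by
      simp [Fintype.card_subtype_compl]
    simp only [Fintype.card_sum, Fintype.card_prod, Fintype.card_fin, h1]
    omega
  constructor
  · -- scroll uninflected → curves uninflected
    intro H i t
    have hli : LinearIndependent ℂ (fun row => scrollJet r a 2 i t 0 row) :=
      (rank_eq_card_iff_li _).mp (by rw [hcard i]; exact H t i 0)
    have hli' := hli.comp Sum.inl Sum.inl_injective
    have heq : ((fun row => scrollJet r a 2 i t 0 row) ∘ Sum.inl)
        = ⇑(blockInclL r i) ∘ fun l : Fin 3 => curveJet (r i) (a i) 2 t l := by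
      funext l
      show blockIncl r i (curveJet (r i) (a i) 2 t l) +
          ∑ i' ∈ Finset.univ.filter (fun i' => i' ≠ i),
            (0 : Fin n → ℂ) i' • blockIncl r i' (curveJet (r i') (a i') 2 t l) = _
      simp [blockInclL]
    rw [heq] at hli'
    have hA := LinearIndependent.of_comp (blockInclL r i) hli'
    have := (rank_eq_card_iff_li (curveJet (r i) (a i) 2 t)).mpr hA
    simpa using this
  · -- curves uninflected → scroll uninflected
    intro H t s u
    have hli2 : ∀ i : Fin n, LinearIndependent ℂ (fun l => curveJet (r i) (a i) 2 t l) :=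
      fun i => (rank_eq_card_iff_li _).mp (by simpa using H i t)
    rw [← hcard s]
    refine (rank_eq_card_iff_li _).mpr (Fintype.linearIndependent_iff.mpr ?_)
    intro g hg
    have hpt : ∀ (j : Fin n) (x : Fin (r j + 1)),
        ∑ row, g row • scrollJet r a 2 s t u row ⟨j, x⟩ = 0 := by
      intro j x
      have h := congrFun hg ⟨j, x⟩
      simpa [Finset.sum_apply] using h
    -- evaluation lemmas
    have E1 : ∀ (l : Fin 3) (x : Fin (r s + 1)),
        scrollJet r a 2 s t u (Sum.inl l) ⟨s, x⟩ = curveJet (r s) (a s) 2 t l x := by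
      intro l x
      show (blockIncl r s _ + _) ⟨s, x⟩ = _
      rw [Pi.add_apply, blockIncl_same, Finset.sum_apply]
      rw [Finset.sum_eq_zero, add_zero]
      intro i hi
      rw [Finset.mem_filter] at hi
      rw [Pi.smul_apply, blockIncl_ne r (Ne.symm hi.2), smul_zero]
    have E3b : ∀ (q : {i : Fin n // i ≠ s} × Fin 2) (j : Fin n) (hj : j ≠ q.1.1)
        (x : Fin (r j + 1)), scrollJet r a 2 s t u (Sum.inr q) ⟨j, x⟩ = 0 := by
      intro q j hj x
      exact blockIncl_ne r hj _ x
    have h1 : ∀ l, g (Sum.inl l) = 0 := by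
      refine Fintype.linearIndependent_iff.mp (hli2 s) (fun l => g (Sum.inl l)) ?_
      funext x
      have h := hpt s x
      rw [Fintype.sum_sum_type] at h
      have e2 : ∑ q : {i : Fin n // i ≠ s} × Fin 2,
          g (Sum.inr q) • scrollJet r a 2 s t u (Sum.inr q) ⟨s, x⟩ = 0 :=
        Finset.sum_eq_zero fun q _ => by rw [E3b q s (Ne.symm q.1.2), smul_zero]
      rw [e2, add_zero] at h
      simp only [Finset.sum_apply, Pi.smul_apply, Pi.zero_apply]
      rw [← h]
      exact Finset.sum_congr rfl fun l _ => by rw [E1]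
    have h2 : ∀ (i : {i : Fin n // i ≠ s}) (m : Fin 2), g (Sum.inr (i, m)) = 0 := by
      intro i
      refine Fintype.linearIndependent_iff.mp (hli1 i.1 t) (fun m => g (Sum.inr (i, m))) ?_
      funext x
      have h := hpt i.1 x
      rw [Fintype.sum_sum_type] at h
      rw [Finset.sum_eq_zero (fun l _ => by rw [h1 l, zero_smul]), zero_add] at h
      rw [Fintype.sum_prod_type] at h
      rw [Finset.sum_eq_single i (fun i' _ hne => Finset.sum_eq_zero fun m _ => by
          rw [E3b (i', m) i.1 (fun hv => hne (Subtype.ext hv.symm)), smul_zero])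
        (fun habs => absurd (Finset.mem_univ i) habs)] at h
      simp only [Finset.sum_apply, Pi.smul_apply, Pi.zero_apply]
      rw [← h]
      refine Finset.sum_congr rfl fun m _ => ?_
      congr 1
      show _ = blockIncl r i.1 (curveJet (r i.1) (a i.1) 2 t m.castSucc) ⟨i.1, x⟩
      rw [blockIncl_same, curveJet_two_castSucc]
    intro row
    rcases row with l | ⟨i, m⟩
    · exact h1 l
    · exact h2 i m
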